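/- Let 𝒮 = {T_1,…,T_m} be a finite collection of piecewise C² uniformly expanding maps of [0,1], Ω := {1,…,m}^ℤ with left shift σ, and T_ω^n := T_{ω_{n−1}} ∘ ⋯ ∘ T_{ω_0}. Let m be Lebesgue measure on [0,1]; for a nonsingular map T define the transfer operator P_T on L¹(m) by T_*(f·m) = (P_T f)·m (equivalently ∫ (g∘T) f dm = ∫ g (P_T f) dm for all bounded measurable g), set P_ω := P_{T_{ω_0}} and P_ω^n := P_{σ^{n−1}ω} ∘ ⋯ ∘ P_ω, and let BV be the space of functions of bounded variation on [0,1] with norm ‖f‖_BV = ‖f‖_{L¹(m)} + var(f). Assume: (LY) there exist r ≥ 1, M > 0, D > 0, ρ ∈ (0,1) with ‖P_ω f‖_BV ≤ M ‖f‖_BV and var(P_ω^r f) ≤ ρ var(f) + D ‖f‖_{L¹(m)} for all ω and f ∈ BV; (Dec) there exist C > 0, θ ∈ (0,1) with ‖P_ω^n f‖_BV ≤ C θ^n ‖f‖_BV for all n ≥ 1, all ω, and all f ∈ BV with ∫ f dm = 0; (Min) there exists c > 0 with inf_{x∈[0,1]} (P_ω^n 1)(x) ≥ c for all n ≥ 1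 and all ω. Then there exists a unique map ω ↦ h_ω ∈ BV such that P_ω h_ω = h_{σω} for all ω, each h_ω is a probability density, the family (h_ω) is bounded in BV, there is C' > 0 with C'^{−1} ≤ h_ω ≤ C' m-a.e. for every ω, and ω ↦ h_ω ∈ BV is Hölder continuous with respect to the symbolic metric d_θ(ω,ω') := θ^{s(ω,ω')}, where s(ω,ω') := inf{ k ≥ 0 : ω_ℓ ≠ ω'_ℓ for some |ℓ| ≤ k }. -/

import Mathlib

open MeasureTheory Filter Set Topology

noncomputable section

/-- The two-sided shift space on `m` symbols. -/
abbrev Om (m : ℕ) := ℤ → Fin m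

/-- The left shift on the two-sided shift space. -/
def shift {m : ℕ} (ω : Om m) : Om m := fun i => ω (i + 1)

/-- Lebesgue measure on `[0,1]`. -/
def mLeb : Measure ℝ := volume.restrict (Set.Icc 0 1)

/-- `T` is a piecewise `C²` uniformly expanding map of `[0,1]` with expansion constant `lam`. -/
def PiecewiseC2Expanding (T : ℝ → ℝ) (lam : ℝ) : Prop :=
  ∃ (N : ℕ) (a : ℕ → ℝ), 1 ≤ N ∧ a 0 = 0 ∧ a N = 1 ∧ (∀ i < N, a i < a (i + 1)) ∧
    ∀ i < N, ∃ g : ℝ → ℝ,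
      ContDiffOn ℝ 2 g (Set.Icc (a i) (a (i + 1))) ∧
      Set.EqOn T g (Set.Ioo (a i) (a (i + 1))) ∧
      (StrictMonoOn g (Set.Icc (a i) (a (i + 1))) ∨
        StrictAntiOn g (Set.Icc (a i) (a (i + 1)))) ∧
      ∀ x ∈ Set.Icc (a i) (a (i + 1)),
        lam ≤ |derivWithin g (Set.Icc (a i) (a (i + 1))) x|

/-- The transfer-operator cocycle `P_ω^n = P_{σ^{n−1}ω} ∘ ⋯ ∘ P_ω`. -/
def Pcomp {m : ℕ} (Pop : Fin m → (ℝ → ℝ) → ℝ → ℝ) (ω : Om m) : ℕ → (ℝ → ℝ) → ℝ → ℝ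
  | 0 => fun f => f
  | n + 1 => fun f => Pop (ω (n : ℤ)) (Pcomp Pop ω n f)

/-- The total variation of `f` on `[0,1]`. -/
def var (f : ℝ → ℝ) : ℝ := (eVariationOn f (Set.Icc 0 1)).toReal

/-- The BV norm `‖f‖_BV = ‖f‖_{L¹(m)} + var(f)` on `[0,1]`. -/
def BVnorm (f : ℝ → ℝ) : ℝ := (∫ x, |f x| ∂mLeb) + var f

/-- `f` is of bounded variation on `[0,1]` (and integrable). -/
def IsBV (f : ℝ → ℝ) : Prop :=
  Integrable f mLeb ∧ BoundedVariationOn f (Set.Icc 0 1)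

/-- An equivariant family of BV probability densities, uniformly bounded in BV,
uniformly bounded away from `0` and `∞`, and Hölder in `ω` with respect to the
symbolic metric `d_θ`. -/
def GoodFamily (m : ℕ) (Pop : Fin m → (ℝ → ℝ) → ℝ → ℝ) (θ : ℝ)
    (h : Om m → ℝ → ℝ) : Prop :=
  (∀ ω, IsBV (h ω)) ∧
  (∀ ω : Om m, Pop (ω 0) (h ω) =ᵐ[mLeb] h (shift ω)) ∧
  (∀ ω, (∀ᵐ x ∂mLeb, 0 ≤ h ω x) ∧ ∫ x, h ω x ∂mLeb = 1) ∧
  (∃ B : ℝ, ∀ ω, BVnorm (h ω) ≤ B) ∧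
  (∃ C' : ℝ, 0 < C' ∧ ∀ ω, ∀ᵐ x ∂mLeb, C'⁻¹ ≤ h ω x ∧ h ω x ≤ C') ∧
  (∃ K e : ℝ, 0 < K ∧ 0 < e ∧ ∀ (n : ℕ) (ω ω' : Om m),
    (∀ ℓ : ℤ, |ℓ| ≤ (n : ℤ) → ω ℓ = ω' ℓ) →
    BVnorm (fun x => h ω x - h ω' x) ≤ K * (θ ^ e) ^ n)

section AuxBasic

lemma mLeb_univ : mLeb Set.univ = 1 := by
  simp [mLeb, Real.volume_Icc]

instance : IsProbabilityMeasure mLeb := ⟨mLeb_univ⟩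

lemma ae_mem_Icc : ∀ᵐ x ∂mLeb, x ∈ Set.Icc (0:ℝ) 1 :=
  ae_restrict_mem measurableSet_Icc

lemma evar_neg (f : ℝ → ℝ) (s : Set ℝ) :
    eVariationOn (fun x => -f x) s = eVariationOn f s := by
  unfold eVariationOn
  congr 1
  funext p
  congr 1
  funext i
  rw [edist_neg_neg]

lemma evar_add_le (f g : ℝ → ℝ) (s : Set ℝ) :
    eVariationOn (fun x => f x + g x) s ≤ eVariationOn f s + eVariationOn g s := by
  refine iSup_le ?_
  rintro ⟨n, u, hu, us⟩
  calc ∑ i ∈ Finset.range n,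
        edist (f (u (i+1)) + g (u (i+1))) (f (u i) + g (u i))
      ≤ ∑ i ∈ Finset.range n,
        (edist (f (u (i+1))) (f (u i)) + edist (g (u (i+1))) (g (u i))) :=
        Finset.sum_le_sum fun i _ => edist_add_add_le _ _ _ _
    _ = (∑ i ∈ Finset.range n, edist (f (u (i+1))) (f (u i)))
        + ∑ i ∈ Finset.range n, edist (g (u (i+1))) (g (u i)) :=
        Finset.sum_add_distrib
    _ ≤ eVariationOn f s + eVariationOn g s :=
        add_le_add (eVariationOn.sum_le (f := f) (n := n) hu us) (eVariationOn.sum_le (f := g) (n := n) hu us)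

lemma evar_sub_le (f g : ℝ → ℝ) (s : Set ℝ) :
    eVariationOn (fun x => f x - g x) s ≤ eVariationOn f s + eVariationOn g s := by
  have : (fun x => f x - g x) = fun x => f x + -g x := by funext x; ring
  rw [this]
  exact (evar_add_le f (fun x => -g x) s).trans (by rw [evar_neg])

lemma evar_const (c : ℝ) (s : Set ℝ) : eVariationOn (fun _ => c) s = 0 :=
  eVariationOn.constant_on fun x hx y hy => by
    obtain ⟨a, -, rfl⟩ := hx; obtain ⟨b, -, rfl⟩ := hy; rfl

lemma evar_limit {F : ℕ → ℝ → ℝ} {f : ℝ → ℝ} {s : Set ℝ} {C : ENNReal}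
    (hC : ∀ n, eVariationOn (F n) s ≤ C)
    (hconv : ∀ x ∈ s, Tendsto (fun n => F n x) atTop (𝓝 (f x))) :
    eVariationOn f s ≤ C := by
  by_contra hlt
  push_neg at hlt
  obtain ⟨n, hn⟩ := (eVariationOn.lowerSemicontinuous_aux hconv hlt).exists
  exact absurd (hC n) (not_le.mpr hn)

lemma var_nonneg (f : ℝ → ℝ) : 0 ≤ var f := ENNReal.toReal_nonneg

lemma BVnorm_nonneg (f : ℝ → ℝ) : 0 ≤ BVnorm f :=
  add_nonneg (integral_nonneg fun x => abs_nonneg _) (var_nonneg f)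

lemma evar_eq_ofReal_var {f : ℝ → ℝ} (hf : BoundedVariationOn f (Set.Icc 0 1)) :
    eVariationOn f (Set.Icc 0 1) = ENNReal.ofReal (var f) :=
  (ENNReal.ofReal_toReal hf).symm

lemma var_le_of_evar_le {f : ℝ → ℝ} {c : ℝ} (hc : 0 ≤ c)
    (h : eVariationOn f (Set.Icc 0 1) ≤ ENNReal.ofReal c) : var f ≤ c :=
  ENNReal.toReal_le_of_le_ofReal hc h

lemma isBV_const (c : ℝ) : IsBV (fun _ => c) :=
  ⟨integrable_const c, by unfold BoundedVariationOn; rw [evar_const]; exact ENNReal.zero_ne_top⟩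

lemma IsBV.add {f g : ℝ → ℝ} (hf : IsBV f) (hg : IsBV g) : IsBV (fun x => f x + g x) :=
  ⟨hf.1.add hg.1, ((evar_add_le f g _).trans_lt
      (ENNReal.add_lt_top.2 ⟨hf.2.lt_top, hg.2.lt_top⟩)).ne⟩

lemma IsBV.sub {f g : ℝ → ℝ} (hf : IsBV f) (hg : IsBV g) : IsBV (fun x => f x - g x) :=
  ⟨hf.1.sub hg.1, ((evar_sub_le f g _).trans_lt
      (ENNReal.add_lt_top.2 ⟨hf.2.lt_top, hg.2.lt_top⟩)).ne⟩

end AuxBasic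
section AuxSup

lemma abs_le_BVnorm {f : ℝ → ℝ} (hf : IsBV f) {x : ℝ} (hx : x ∈ Set.Icc (0:ℝ) 1) :
    |f x| ≤ BVnorm f := by
  have hint : Integrable (fun y => |f y|) mLeb := hf.1.abs
  have hmain : ∃ y ∈ Set.Icc (0:ℝ) 1, |f y| ≤ ∫ z, |f z| ∂mLeb := by
    by_contra hcon
    push_neg at hcon
    set c := ∫ z, |f z| ∂mLeb with hc
    have h1 : ∀ᵐ y ∂mLeb, c < |f y| := ae_mem_Icc.mono fun y hy => hcon y hy
    have hic : ∫ z, (|f z| - c) ∂mLeb = 0 := by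
      rw [integral_sub hint (integrable_const c), integral_const]
      simp [mLeb_univ, hc]
    have hnn : 0 ≤ᵐ[mLeb] fun z => |f z| - c := h1.mono fun y hy => by
      simp only [Pi.zero_apply]; linarith
    have hz := (integral_eq_zero_iff_of_nonneg_ae hnn (hint.sub (integrable_const c))).1 hic
    have hbad : ∀ᵐ y ∂mLeb, False := by
      filter_upwards [h1, hz] with y hy1 hy2
      have : |f y| - c = 0 := hy2
      linarith
    have : mLeb Set.univ = 0 := by simpa [ae_iff] using hbad
    rw [mLeb_univ] at this
    exact one_ne_zero this
  obtain ⟨y, hy, hyle⟩ := hmain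
  have hd : dist (f x) (f y) ≤ (eVariationOn f (Set.Icc 0 1)).toReal :=
    hf.2.dist_le hx hy
  have habs : |f x| - |f y| ≤ |f x - f y| := abs_sub_abs_le_abs_sub _ _
  rw [Real.dist_eq] at hd
  unfold BVnorm var
  linarith

lemma integral_abs_le_of_bound {f : ℝ → ℝ} (hf : Integrable f mLeb) {c : ℝ}
    (hb : ∀ x ∈ Set.Icc (0:ℝ) 1, |f x| ≤ c) : (∫ x, |f x| ∂mLeb) ≤ c := by
  have : (∫ x, |f x| ∂mLeb) ≤ ∫ _, c ∂mLeb :=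
    integral_mono_ae hf.abs (integrable_const c) (ae_mem_Icc.mono fun x hx => hb x hx)
  simpa [integral_const, mLeb_univ] using this

lemma uniq_of_dual {F G : ℝ → ℝ} (hF : Integrable F mLeb) (hG : Integrable G mLeb)
    (h : ∀ g : ℝ → ℝ, Measurable g → (∃ Cg : ℝ, ∀ x, |g x| ≤ Cg) →
      ∫ x, g x * F x ∂mLeb = ∫ x, g x * G x ∂mLeb) : F =ᵐ[mLeb] G := by
  apply ae_eq_of_forall_setIntegral_eq_of_sigmaFinite
    (fun s _ _ => hF.integrableOn) (fun s _ _ => hG.integrableOn)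
  intro s hs _
  have hgm : Measurable (s.indicator fun _ => (1:ℝ)) := measurable_const.indicator hs
  have hgb : ∃ Cg : ℝ, ∀ x, |s.indicator (fun _ => (1:ℝ)) x| ≤ Cg := by
    refine ⟨1, fun x => ?_⟩
    by_cases hx : x ∈ s <;> simp [Set.indicator_apply, hx]
  have key := h _ hgm hgb
  have e1 : ∀ (H : ℝ → ℝ), (fun x => s.indicator (fun _ => (1:ℝ)) x * H x) = s.indicator H := by
    intro H; funext x; by_cases hx : x ∈ s <;> simp [Set.indicator_apply, hx]
  rw [e1 F, e1 G, integral_indicator hs, integral_indicator hs] at key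
  exact key

end AuxSup
section AuxStruct

variable {m : ℕ}

/-- The inverse shift iterated `n` times. -/
def shiftNeg (n : ℕ) (ω : Om m) : Om m := fun i => ω (i - n)

lemma shift_shiftNeg (k : ℕ) (ω : Om m) : shift (shiftNeg (k+1) ω) = shiftNeg k ω := by
  funext j
  unfold shift shiftNeg
  congr 1
  push_cast
  ring

lemma shiftNeg_shift (k : ℕ) (ω : Om m) : shiftNeg (k+1) (shift ω) = shiftNeg k ω := by
  funext j
  unfold shift shiftNeg
  congr 1
  push_cast
  ring

variable (Pop : Fin m → (ℝ → ℝ) → ℝ → ℝ)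

lemma pcomp_succ_left (ω : Om m) (n : ℕ) (f : ℝ → ℝ) :
    Pcomp Pop ω (n+1) f = Pcomp Pop (shift ω) n (Pop (ω 0) f) := by
  induction n with
  | zero => rfl
  | succ n ih =>
      show Pop (ω (n+1 : ℕ)) (Pcomp Pop ω (n+1) f) = Pop (shift ω (n : ℕ)) _
      rw [ih]
      have hcast : ((n+1 : ℕ) : ℤ) = (n : ℤ) + 1 := by push_cast; ring
      rw [hcast]
      rfl

lemma pcomp_congr_word {W W' : Om m} {n : ℕ} (h : ∀ j : ℕ, j < n → W j = W' j) (f : ℝ → ℝ) :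
    Pcomp Pop W n f = Pcomp Pop W' n f := by
  induction n with
  | zero => rfl
  | succ n ih =>
      show Pop (W (n : ℕ)) (Pcomp Pop W n f) = Pop (W' (n : ℕ)) (Pcomp Pop W' n f)
      rw [h n (Nat.lt_succ_self n), ih fun j hj => h j (hj.trans (Nat.lt_succ_self n))]

/-- The building blocks of the equivariant family. -/
def dfun (k : ℕ) (ω : Om m) : ℝ → ℝ :=
  Pcomp Pop (shiftNeg k ω) k (fun x => Pop (ω (-(k:ℤ)-1)) (fun _ => 1) x - 1)

/-- Partial sums. -/
def Sfun (n : ℕ) (ω : Om m) : ℝ → ℝ :=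
  fun x => 1 + ∑ k ∈ Finset.range n, dfun Pop k ω x

/-- The candidate equivariant density. -/
def hfun (ω : Om m) : ℝ → ℝ := fun x => 1 + ∑' k, dfun Pop k ω x

lemma dfun_zero (ω : Om m) : dfun Pop 0 ω = fun x => Pop (ω (-1)) (fun _ => 1) x - 1 := by
  unfold dfun
  norm_num
  rfl

lemma dfun_shift (k : ℕ) (ω : Om m) :
    dfun Pop (k+1) (shift ω) = Pop (ω 0) (dfun Pop k ω) := by
  unfold dfun
  show Pop (shiftNeg (k+1) (shift ω) (k : ℕ)) _ = _
  rw [shiftNeg_shift]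
  have h0 : shiftNeg k ω (k : ℕ) = ω 0 := by unfold shiftNeg; norm_num
  have h1 : (shift ω) (-((k:ℤ)+1)-1) = ω (-(k:ℤ)-1) := by unfold shift; congr 1; ring
  rw [h0]
  congr 1
  have : (-(((k:ℕ)+1 : ℕ):ℤ)-1) = (-((k:ℤ)+1)-1) := by push_cast; ring
  rw [this, h1]

lemma u_succ (k : ℕ) (ω : Om m) :
    Pcomp Pop (shiftNeg (k+1) ω) (k+1) (fun _ => 1)
      = Pcomp Pop (shiftNeg k ω) k (Pop (ω (-(k:ℤ)-1)) (fun _ => 1)) := by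
  rw [pcomp_succ_left, shift_shiftNeg]
  have h0 : shiftNeg (k+1) ω 0 = ω (-(k:ℤ)-1) := by
    unfold shiftNeg
    congr 1
    push_cast
    ring
  rw [h0]

lemma dfun_congr_word {k : ℕ} {ω ω' : Om m}
    (h : ∀ ℓ : ℤ, |ℓ| ≤ (k:ℤ)+1 → ω ℓ = ω' ℓ) :
    dfun Pop k ω = dfun Pop k ω' := by
  unfold dfun
  rw [h (-(k:ℤ)-1) (by rw [abs_of_nonpos (by omega)]; omega)]
  exact pcomp_congr_word Pop (fun j hj => h (j - k) (by
    rw [abs_of_nonpos (by omega)]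
    omega)) _

end AuxStruct
section AuxDual

variable {m : ℕ}

/-- The duality hypothesis. -/
def DualHyp (T : Fin m → ℝ → ℝ) (Pop : Fin m → (ℝ → ℝ) → ℝ → ℝ) : Prop :=
  ∀ (i : Fin m) (f : ℝ → ℝ), Integrable f mLeb →
    ∀ g : ℝ → ℝ, Measurable g → (∃ Cg : ℝ, ∀ x, |g x| ≤ Cg) →
      ∫ x, g (T i x) * f x ∂mLeb = ∫ x, g x * Pop i f x ∂mLeb

/-- The BV-stability hypothesis. -/
def BVHyp (Pop : Fin m → (ℝ → ℝ) → ℝ → ℝ) : Prop :=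
  ∀ (i : Fin m) (f : ℝ → ℝ), IsBV f → IsBV (Pop i f)

variable {T : Fin m → ℝ → ℝ} {Pop : Fin m → (ℝ → ℝ) → ℝ → ℝ}

lemma int_mul_comp (hTm : ∀ i, Measurable (T i)) {i : Fin m} {g f : ℝ → ℝ}
    (hg : Measurable g) (hgb : ∃ Cg : ℝ, ∀ x, |g x| ≤ Cg) (hf : Integrable f mLeb) :
    Integrable (fun x => g (T i x) * f x) mLeb := by
  obtain ⟨Cg, hCg⟩ := hgb
  exact hf.bdd_mul (c := Cg) ((hg.comp (hTm i)).aestronglyMeasurable)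
    (ae_of_all _ fun x => by rw [Real.norm_eq_abs]; exact hCg _)

lemma int_mul (hg : Measurable g) (hgb : ∃ Cg : ℝ, ∀ x, |g x| ≤ Cg)
    {f : ℝ → ℝ} (hf : Integrable f mLeb) :
    Integrable (fun x => g x * f x) mLeb := by
  obtain ⟨Cg, hCg⟩ := hgb
  exact hf.bdd_mul (c := Cg) hg.aestronglyMeasurable (ae_of_all _ fun x => by rw [Real.norm_eq_abs]; exact hCg _)

lemma dual_int (hd : DualHyp T Pop) {i : Fin m} {f : ℝ → ℝ} (hf : Integrable f mLeb) :
    ∫ x, Pop i f x ∂mLeb = ∫ x, f x ∂mLeb := by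
  have := hd i f hf (fun _ => 1) measurable_const ⟨1, fun x => by norm_num⟩
  simpa using this.symm

lemma dual_congr (hd : DualHyp T Pop) (hbv : BVHyp Pop) {i : Fin m} {f f' : ℝ → ℝ}
    (hf : IsBV f) (hf' : IsBV f') (hff' : f =ᵐ[mLeb] f') :
    Pop i f =ᵐ[mLeb] Pop i f' := by
  apply uniq_of_dual (hbv i f hf).1 (hbv i f' hf').1
  intro g hg hgb
  rw [← hd i f hf.1 g hg hgb, ← hd i f' hf'.1 g hg hgb]
  exact integral_congr_ae (hff'.mono fun x hx => by dsimp only; rw [hx])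

lemma dual_sub (hd : DualHyp T Pop) (hbv : BVHyp Pop) (hTm : ∀ i, Measurable (T i))
    {i : Fin m} {f g : ℝ → ℝ} (hf : IsBV f) (hg : IsBV g) :
    Pop i (fun x => f x - g x) =ᵐ[mLeb] fun x => Pop i f x - Pop i g x := by
  apply uniq_of_dual (hbv i _ (hf.sub hg)).1 ((hbv i f hf).1.sub (hbv i g hg).1)
  intro G hG hGb
  simp only [Pi.sub_apply]
  rw [← hd i _ (hf.sub hg).1 G hG hGb]
  have e1 : ∫ x, G (T i x) * (f x - g x) ∂mLeb
      = (∫ x, G (T i x) * f x ∂mLeb) - ∫ x, G (T i x) * g x ∂mLeb := by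
    rw [← integral_sub (int_mul_comp hTm hG hGb hf.1) (int_mul_comp hTm hG hGb hg.1)]
    congr 1; funext x; ring
  have e2 : ∫ x, G x * (Pop i f x - Pop i g x) ∂mLeb
      = (∫ x, G x * Pop i f x ∂mLeb) - ∫ x, G x * Pop i g x ∂mLeb := by
    rw [← integral_sub (int_mul hG hGb (hbv i f hf).1) (int_mul hG hGb (hbv i g hg).1)]
    congr 1; funext x; ring
  rw [e1, e2, hd i f hf.1 G hG hGb, hd i g hg.1 G hG hGb]

lemma dual_add (hd : DualHyp T Pop) (hbv : BVHyp Pop) (hTm : ∀ i, Measurable (T i))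
    {i : Fin m} {f g : ℝ → ℝ} (hf : IsBV f) (hg : IsBV g) :
    Pop i (fun x => f x + g x) =ᵐ[mLeb] fun x => Pop i f x + Pop i g x := by
  apply uniq_of_dual (hbv i _ (hf.add hg)).1 ((hbv i f hf).1.add (hbv i g hg).1)
  intro G hG hGb
  simp only [Pi.add_apply]
  rw [← hd i _ (hf.add hg).1 G hG hGb]
  have e1 : ∫ x, G (T i x) * (f x + g x) ∂mLeb
      = (∫ x, G (T i x) * f x ∂mLeb) + ∫ x, G (T i x) * g x ∂mLeb := by
    rw [← integral_add (int_mul_comp hTm hG hGb hf.1) (int_mul_comp hTm hG hGb hg.1)]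
    congr 1; funext x; ring
  have e2 : ∫ x, G x * (Pop i f x + Pop i g x) ∂mLeb
      = (∫ x, G x * Pop i f x ∂mLeb) + ∫ x, G x * Pop i g x ∂mLeb := by
    rw [← integral_add (int_mul hG hGb (hbv i f hf).1) (int_mul hG hGb (hbv i g hg).1)]
    congr 1; funext x; ring
  rw [e1, e2, hd i f hf.1 G hG hGb, hd i g hg.1 G hG hGb]

lemma pcomp_isBV (hbv : BVHyp Pop) {f : ℝ → ℝ} (hf : IsBV f) (ω : Om m) (n : ℕ) :
    IsBV (Pcomp Pop ω n f) := by
  induction n with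
  | zero => exact hf
  | succ n ih => exact hbv _ _ ih

lemma pcomp_int (hd : DualHyp T Pop) (hbv : BVHyp Pop) {f : ℝ → ℝ} (hf : IsBV f)
    (ω : Om m) (n : ℕ) :
    ∫ x, Pcomp Pop ω n f x ∂mLeb = ∫ x, f x ∂mLeb := by
  induction n with
  | zero => rfl
  | succ n ih =>
      show ∫ x, Pop (ω (n:ℕ)) (Pcomp Pop ω n f) x ∂mLeb = _
      rw [dual_int hd (pcomp_isBV hbv hf ω n).1, ih]

lemma pcomp_congr_ae (hd : DualHyp T Pop) (hbv : BVHyp Pop) {f f' : ℝ → ℝ}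
    (hf : IsBV f) (hf' : IsBV f') (hff' : f =ᵐ[mLeb] f') (ω : Om m) (n : ℕ) :
    Pcomp Pop ω n f =ᵐ[mLeb] Pcomp Pop ω n f' := by
  induction n with
  | zero => exact hff'
  | succ n ih =>
      exact dual_congr hd hbv (pcomp_isBV hbv hf ω n) (pcomp_isBV hbv hf' ω n) ih

lemma pcomp_sub (hd : DualHyp T Pop) (hbv : BVHyp Pop) (hTm : ∀ i, Measurable (T i))
    {f g : ℝ → ℝ} (hf : IsBV f) (hg : IsBV g) (ω : Om m) (n : ℕ) :
    Pcomp Pop ω n (fun x => f x - g x)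
      =ᵐ[mLeb] fun x => Pcomp Pop ω n f x - Pcomp Pop ω n g x := by
  induction n with
  | zero => rfl
  | succ n ih =>
      have h1 : Pop (ω (n:ℕ)) (Pcomp Pop ω n (fun x => f x - g x))
          =ᵐ[mLeb] Pop (ω (n:ℕ)) (fun x => Pcomp Pop ω n f x - Pcomp Pop ω n g x) :=
        dual_congr hd hbv (pcomp_isBV hbv (hf.sub hg) ω n)
          ((pcomp_isBV hbv hf ω n).sub (pcomp_isBV hbv hg ω n)) ih
      have h2 := dual_sub hd hbv hTm (i := ω (n:ℕ))
        (pcomp_isBV hbv hf ω n) (pcomp_isBV hbv hg ω n)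
      exact h1.trans h2

end AuxDual
section AuxLimit

variable {m : ℕ} {T : Fin m → ℝ → ℝ} {Pop : Fin m → (ℝ → ℝ) → ℝ → ℝ}

lemma shiftNeg_zero (ω : Om m) : shiftNeg 0 ω = ω := by
  funext i; unfold shiftNeg; norm_num

lemma isBV_e (hbv : BVHyp Pop) (i : Fin m) :
    IsBV (fun x => Pop i (fun _ => 1) x - 1) :=
  (hbv i _ (isBV_const 1)).sub (isBV_const 1)

lemma isBV_dfun (hbv : BVHyp Pop) (k : ℕ) (ω : Om m) : IsBV (dfun Pop k ω) :=
  pcomp_isBV hbv (isBV_e hbv _) _ _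

lemma isBV_Sfun (hbv : BVHyp Pop) (n : ℕ) (ω : Om m) : IsBV (Sfun Pop n ω) := by
  induction n with
  | zero =>
      have : Sfun Pop 0 ω = fun _ => (1:ℝ) := by
        funext x; unfold Sfun; simp
      rw [this]; exact isBV_const 1
  | succ n ih =>
      have : Sfun Pop (n+1) ω = fun x => Sfun Pop n ω x + dfun Pop n ω x := by
        funext x; unfold Sfun; rw [Finset.sum_range_succ]; ring
      rw [this]; exact ih.add (isBV_dfun hbv n ω)

lemma Sfun_shift (n : ℕ) (ω : Om m) :
    Sfun Pop (n+1) (shift ω)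
      = fun x => Pop (ω 0) (fun _ => 1) x
          + ∑ k ∈ Finset.range n, Pop (ω 0) (dfun Pop k ω) x := by
  funext x
  unfold Sfun
  rw [Finset.sum_range_succ']
  have h0 : dfun Pop 0 (shift ω) x = Pop (ω 0) (fun _ => 1) x - 1 := by
    rw [dfun_zero]
    have : (shift ω) (-1) = ω 0 := by unfold shift; norm_num
    rw [this]
  have hk : ∀ k, dfun Pop (k+1) (shift ω) x = Pop (ω 0) (dfun Pop k ω) x := by
    intro k; rw [dfun_shift]
  simp only [hk]
  rw [h0]
  ring

lemma pop_Sfun (hd : DualHyp T Pop) (hbv : BVHyp Pop) (hTm : ∀ i, Measurable (T i))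
    (n : ℕ) (ω : Om m) :
    Pop (ω 0) (Sfun Pop n ω) =ᵐ[mLeb] Sfun Pop (n+1) (shift ω) := by
  rw [Sfun_shift]
  induction n with
  | zero =>
      have e0 : Sfun Pop 0 ω = fun _ => (1:ℝ) := by funext x; unfold Sfun; simp
      rw [e0]
      simp only [Finset.range_zero, Finset.sum_empty, add_zero]
      rfl
  | succ n ih =>
      have e1 : Sfun Pop (n+1) ω = fun x => Sfun Pop n ω x + dfun Pop n ω x := by
        funext x; unfold Sfun; rw [Finset.sum_range_succ]; ring
      rw [e1]
      have h2 := dual_add hd hbv hTm (i := ω 0) (isBV_Sfun hbv n ω) (isBV_dfun hbv n ω)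
      refine h2.trans ?_
      have h3 := ih.add (EventuallyEq.refl (ae mLeb) (fun x => Pop (ω 0) (dfun Pop n ω) x))
      refine h3.trans ?_
      apply Filter.Eventually.of_forall
      intro x
      simp only [Pi.add_apply]
      rw [Finset.sum_range_succ]
      ring

lemma pop_limit (hd : DualHyp T Pop) (hbv : BVHyp Pop) (hTm : ∀ i, Measurable (T i))
    {i : Fin m} {f q : ℝ → ℝ} {fs qs : ℕ → ℝ → ℝ} {Cb : ℝ}
    (hfB : IsBV f) (hqI : Integrable q mLeb)
    (hfs : ∀ n, IsBV (fs n)) (hqs : ∀ n, Pop i (fs n) =ᵐ[mLeb] qs n)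
    (hqsI : ∀ n, Integrable (qs n) mLeb)
    (hbnd : ∀ n, ∀ᵐ x ∂mLeb, |fs n x| ≤ Cb)
    (hbnd' : ∀ n, ∀ᵐ x ∂mLeb, |qs n x| ≤ Cb)
    (hconv : ∀ᵐ x ∂mLeb, Tendsto (fun n => fs n x) atTop (𝓝 (f x)))
    (hconv' : ∀ᵐ x ∂mLeb, Tendsto (fun n => qs n x) atTop (𝓝 (q x))) :
    Pop i f =ᵐ[mLeb] q := by
  apply uniq_of_dual (hbv i f hfB).1 hqI
  intro g hg hgb
  obtain ⟨Cg, hCg⟩ := hgb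
  have hCg0 : 0 ≤ Cg := le_trans (abs_nonneg _) (hCg 0)
  have t1 : Tendsto (fun n => ∫ x, g (T i x) * fs n x ∂mLeb) atTop
      (𝓝 (∫ x, g (T i x) * f x ∂mLeb)) := by
    apply tendsto_integral_of_dominated_convergence (fun _ => Cg * Cb)
    · exact fun n => ((hg.comp (hTm i)).aestronglyMeasurable.mul
        (hfs n).1.aestronglyMeasurable)
    · exact integrable_const _
    · intro n
      filter_upwards [hbnd n] with x hx
      rw [Real.norm_eq_abs, abs_mul]
      exact mul_le_mul (hCg _) hx (abs_nonneg _) hCg0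
    · filter_upwards [hconv] with x hx
      exact hx.const_mul _
  have t2 : Tendsto (fun n => ∫ x, g x * qs n x ∂mLeb) atTop
      (𝓝 (∫ x, g x * q x ∂mLeb)) := by
    apply tendsto_integral_of_dominated_convergence (fun _ => Cg * Cb)
    · exact fun n => (hg.aestronglyMeasurable.mul (hqsI n).aestronglyMeasurable)
    · exact integrable_const _
    · intro n
      filter_upwards [hbnd' n] with x hx
      rw [Real.norm_eq_abs, abs_mul]
      exact mul_le_mul (hCg _) hx (abs_nonneg _) hCg0
    · filter_upwards [hconv'] with x hx
      exact hx.const_mul _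
  have heqn : ∀ n, ∫ x, g (T i x) * fs n x ∂mLeb = ∫ x, g x * qs n x ∂mLeb := by
    intro n
    rw [hd i (fs n) (hfs n).1 g hg ⟨Cg, hCg⟩]
    exact integral_congr_ae ((hqs n).mono fun x hx => by dsimp only; rw [hx])
  rw [← hd i f hfB.1 g hg ⟨Cg, hCg⟩]
  refine tendsto_nhds_unique t1 ?_
  simp only [heqn]
  exact t2

lemma pcomp_equivariant (hd : DualHyp T Pop) (hbv : BVHyp Pop)
    {h' : Om m → ℝ → ℝ} (h'BV : ∀ ω, IsBV (h' ω))
    (heq : ∀ ω : Om m, Pop (ω 0) (h' ω) =ᵐ[mLeb] h' (shift ω)) (n : ℕ) (ω : Om m) :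
    Pcomp Pop (shiftNeg n ω) n (h' (shiftNeg n ω)) =ᵐ[mLeb] h' ω := by
  induction n generalizing ω with
  | zero =>
      rw [shiftNeg_zero]
      exact EventuallyEq.rfl
  | succ n ih =>
      rw [pcomp_succ_left, shift_shiftNeg]
      have he := heq (shiftNeg (n+1) ω)
      rw [shift_shiftNeg] at he
      have hstep := pcomp_congr_ae hd hbv
        (hbv _ _ (h'BV (shiftNeg (n+1) ω))) (h'BV (shiftNeg n ω)) he (shiftNeg n ω) n
      exact hstep.trans (ih ω)

end AuxLimit
section AuxMore

lemma evar_sum_le (g : ℕ → ℝ → ℝ) (N : ℕ) (s : Set ℝ) :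
    eVariationOn (fun x => ∑ k ∈ Finset.range N, g k x) s
      ≤ ∑ k ∈ Finset.range N, eVariationOn (g k) s := by
  induction N with
  | zero =>
      simp only [Finset.range_zero, Finset.sum_empty]
      rw [evar_const 0]
  | succ N ih =>
      have e1 : (fun x => ∑ k ∈ Finset.range (N+1), g k x)
          = fun x => (∑ k ∈ Finset.range N, g k x) + g N x := by
        funext x; rw [Finset.sum_range_succ]
      rw [e1, Finset.sum_range_succ]
      exact (evar_add_le _ _ s).trans (add_le_add ih le_rfl)

lemma var_sub_le {f g : ℝ → ℝ} (hf : BoundedVariationOn f (Set.Icc 0 1))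
    (hg : BoundedVariationOn g (Set.Icc 0 1)) :
    var (fun x => f x - g x) ≤ var f + var g := by
  apply var_le_of_evar_le (add_nonneg (var_nonneg f) (var_nonneg g))
  refine (evar_sub_le f g _).trans ?_
  rw [evar_eq_ofReal_var hf, evar_eq_ofReal_var hg,
    ENNReal.ofReal_add (var_nonneg f) (var_nonneg g)]

lemma integral_abs_sub_le {f g : ℝ → ℝ} (hf : Integrable f mLeb) (hg : Integrable g mLeb) :
    (∫ x, |f x - g x| ∂mLeb) ≤ (∫ x, |f x| ∂mLeb) + ∫ x, |g x| ∂mLeb := by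
  rw [← integral_add hf.abs hg.abs]
  exact integral_mono (hf.sub hg).abs (hf.abs.add hg.abs) fun x => abs_sub _ _

lemma BVnorm_sub_le {f g : ℝ → ℝ} (hf : IsBV f) (hg : IsBV g) :
    BVnorm (fun x => f x - g x) ≤ BVnorm f + BVnorm g := by
  unfold BVnorm
  have h1 := integral_abs_sub_le hf.1 hg.1
  have h2 := var_sub_le hf.2 hg.2
  linarith

lemma integral_abs_le_BVnorm (f : ℝ → ℝ) : (∫ x, |f x| ∂mLeb) ≤ BVnorm f := by
  unfold BVnorm
  have := var_nonneg f
  linarith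

end AuxMore

theorem stmt11 (m : ℕ) (hm : 1 ≤ m) (T : Fin m → ℝ → ℝ) (lam : ℝ) (hlam : 1 < lam)
    (hT : ∀ i, PiecewiseC2Expanding (T i) lam)
    (hmaps : ∀ i, Set.MapsTo (T i) (Set.Icc 0 1) (Set.Icc 0 1))
    (hTmeas : ∀ i, Measurable (T i))
    -- the transfer operators with respect to Lebesgue measure, defined by duality
    (Pop : Fin m → (ℝ → ℝ) → ℝ → ℝ)
    (hdual : ∀ (i : Fin m) (f : ℝ → ℝ), Integrable f mLeb →
      ∀ g : ℝ → ℝ, Measurable g → (∃ Cg : ℝ, ∀ x, |g x| ≤ Cg) →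
        ∫ x, g (T i x) * f x ∂mLeb = ∫ x, g x * Pop i f x ∂mLeb)
    (hPopBV : ∀ (i : Fin m) (f : ℝ → ℝ), IsBV f → IsBV (Pop i f))
    -- (LY): uniform Lasota–Yorke inequalities
    (r : ℕ) (hr : 1 ≤ r) (M D : ℝ) (hM : 0 < M) (hD : 0 < D)
    (ρ : ℝ) (hρ : ρ ∈ Set.Ioo (0 : ℝ) 1)
    (hLY1 : ∀ (ω : Om m) (f : ℝ → ℝ), IsBV f → BVnorm (Pop (ω 0) f) ≤ M * BVnorm f)
    (hLY2 : ∀ (ω : Om m) (f : ℝ → ℝ), IsBV f →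
      var (Pcomp Pop ω r f) ≤ ρ * var f + D * ∫ x, |f x| ∂mLeb)
    -- (Dec): exponential decay on mean-zero BV functions
    (Cdec : ℝ) (hCdec : 0 < Cdec) (θ : ℝ) (hθ : θ ∈ Set.Ioo (0 : ℝ) 1)
    (hDec : ∀ (n : ℕ), 1 ≤ n → ∀ (ω : Om m) (f : ℝ → ℝ), IsBV f →
      (∫ x, f x ∂mLeb) = 0 → BVnorm (Pcomp Pop ω n f) ≤ Cdec * θ ^ n * BVnorm f)
    -- (Min): uniform lower bound
    (cmin : ℝ) (hcmin : 0 < cmin)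
    (hMin : ∀ (n : ℕ), 1 ≤ n → ∀ (ω : Om m), ∀ x ∈ Set.Icc (0 : ℝ) 1,
      cmin ≤ Pcomp Pop ω n (fun _ => 1) x) :
    ∃ h : Om m → ℝ → ℝ, GoodFamily m Pop θ h ∧
      ∀ h' : Om m → ℝ → ℝ, GoodFamily m Pop θ h' → ∀ ω, h' ω =ᵐ[mLeb] h ω := by
  classical
  have hθ0 : (0:ℝ) < θ := hθ.1
  have hθ1 : θ < 1 := hθ.2
  have hd : DualHyp T Pop := hdual
  have hbv : BVHyp Pop := hPopBV
  have h1θ : (0:ℝ) < 1 - θ := by linarith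
  obtain ⟨F0, hF0⟩ :=
    Finite.exists_le fun i : Fin m => BVnorm (fun x => Pop i (fun _ => 1) x - 1)
  set F : ℝ := max F0 0 with hFdef
  have hFb : ∀ i : Fin m, BVnorm (fun x => Pop i (fun _ => 1) x - 1) ≤ F :=
    fun i => (hF0 i).trans (le_max_left _ _)
  have hFnn : (0:ℝ) ≤ F := le_max_right _ _
  set C₀ : ℝ := max Cdec 1 with hC₀def
  have hC₀1 : (1:ℝ) ≤ C₀ := le_max_right _ _
  have hC₀0 : (0:ℝ) < C₀ := lt_of_lt_of_le one_pos hC₀1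
  have hCd : Cdec ≤ C₀ := le_max_left _ _
  set b : ℕ → ℝ := fun k => C₀ * F * θ ^ k with hbdef
  have hbnn : ∀ k, 0 ≤ b k := fun k =>
    mul_nonneg (mul_nonneg hC₀0.le hFnn) (pow_pos hθ0 k).le
  have hsum_b : Summable b := (summable_geometric_of_lt_one hθ0.le hθ1).mul_left _
  set X : ℝ := C₀ * F * (1 - θ)⁻¹ with hXdef
  have hX0 : 0 ≤ X := mul_nonneg (mul_nonneg hC₀0.le hFnn) (inv_nonneg.2 h1θ.le)
  have htsum_b : ∑' k, b k = X := by
    simp only [hbdef, hXdef]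
    rw [tsum_mul_left, tsum_geometric_of_lt_one hθ0.le hθ1]
  have hinte : ∀ i : Fin m, ∫ x, (Pop i (fun _ => 1) x - 1) ∂mLeb = 0 := by
    intro i
    rw [integral_sub (hbv i _ (isBV_const 1)).1 (integrable_const 1),
      dual_int hd (integrable_const 1)]
    simp
  have hdBV : ∀ (k : ℕ) (ω : Om m), BVnorm (dfun Pop k ω) ≤ b k := by
    intro k ω
    rcases Nat.eq_zero_or_pos k with rfl | hk
    · rw [dfun_zero]
      refine (hFb _).trans ?_
      simp only [hbdef, pow_zero, mul_one]
      nlinarith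
    · have he := isBV_e hbv (ω (-(k:ℤ)-1))
      have hdec := hDec k hk (shiftNeg k ω) _ he (hinte (ω (-(k:ℤ)-1)))
      have hgoal : BVnorm (dfun Pop k ω)
          = BVnorm (Pcomp Pop (shiftNeg k ω) k
              (fun x => Pop (ω (-(k:ℤ)-1)) (fun _ => 1) x - 1)) := rfl
      rw [hgoal]
      refine hdec.trans ?_
      have h1 : BVnorm (fun x => Pop (ω (-(k:ℤ)-1)) (fun _ => 1) x - 1) ≤ F := hFb _
      have h2 : (0:ℝ) < θ ^ k := pow_pos hθ0 k
      have h3 : 0 ≤ BVnorm (fun x => Pop (ω (-(k:ℤ)-1)) (fun _ => 1) x - 1) :=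
        BVnorm_nonneg _
      simp only [hbdef]
      calc Cdec * θ ^ k * BVnorm (fun x => Pop (ω (-(k:ℤ)-1)) (fun _ => 1) x - 1)
          ≤ Cdec * θ ^ k * F :=
            mul_le_mul_of_nonneg_left h1 (mul_nonneg hCdec.le h2.le)
        _ ≤ C₀ * θ ^ k * F :=
            mul_le_mul_of_nonneg_right
              (mul_le_mul_of_nonneg_right hCd h2.le) hFnn
        _ = C₀ * F * θ ^ k := by ring
  have hdpt : ∀ (k : ℕ) (ω : Om m) {x : ℝ}, x ∈ Set.Icc (0:ℝ) 1 →
      |dfun Pop k ω x| ≤ b k :=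
    fun k ω x hx => (abs_le_BVnorm (isBV_dfun hbv k ω) hx).trans (hdBV k ω)
  have hdvar : ∀ (k : ℕ) (ω : Om m),
      eVariationOn (dfun Pop k ω) (Set.Icc 0 1) ≤ ENNReal.ofReal (b k) := by
    intro k ω
    rw [evar_eq_ofReal_var (isBV_dfun hbv k ω).2]
    apply ENNReal.ofReal_le_ofReal
    have h := hdBV k ω
    have hi : 0 ≤ ∫ x, |dfun Pop k ω x| ∂mLeb := integral_nonneg fun x => abs_nonneg _
    unfold BVnorm at h
    linarith
  have hsummable : ∀ (ω : Om m) {x : ℝ}, x ∈ Set.Icc (0:ℝ) 1 →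
      Summable (fun k => dfun Pop k ω x) :=
    fun ω x hx => Summable.of_norm_bounded hsum_b fun k => by
      rw [Real.norm_eq_abs]; exact hdpt k ω hx
  have hconvS : ∀ (ω : Om m) {x : ℝ}, x ∈ Set.Icc (0:ℝ) 1 →
      Tendsto (fun n => Sfun Pop n ω x) atTop (𝓝 (hfun Pop ω x)) := by
    intro ω x hx
    exact ((hsummable ω hx).hasSum.tendsto_sum_nat).const_add (1:ℝ)
  set Cb : ℝ := 1 + X with hCbdef
  have hCb1 : (1:ℝ) ≤ Cb := by simp only [hCbdef]; linarith
  have hCb0 : (0:ℝ) < Cb := lt_of_lt_of_le one_pos hCb1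
  have hSpt : ∀ (n : ℕ) (ω : Om m) {x : ℝ}, x ∈ Set.Icc (0:ℝ) 1 →
      |Sfun Pop n ω x| ≤ Cb := by
    intro n ω x hx
    have h1 : |∑ k ∈ Finset.range n, dfun Pop k ω x| ≤ ∑ k ∈ Finset.range n, b k :=
      (Finset.abs_sum_le_sum_abs _ _).trans
        (Finset.sum_le_sum fun k _ => hdpt k ω hx)
    have h2 : ∑ k ∈ Finset.range n, b k ≤ X := by
      rw [← htsum_b]; exact Summable.sum_le_tsum _ (fun k _ => hbnn k) hsum_b
    have h3 : |Sfun Pop n ω x| ≤ |(1:ℝ)| + |∑ k ∈ Finset.range n, dfun Pop k ω x| :=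
      abs_add_le _ _
    rw [abs_one] at h3
    simp only [hCbdef]
    linarith
  have hhpt : ∀ (ω : Om m) {x : ℝ}, x ∈ Set.Icc (0:ℝ) 1 → |hfun Pop ω x| ≤ Cb := by
    intro ω x hx
    exact le_of_tendsto (hconvS ω hx).abs
      (Filter.Eventually.of_forall fun n => hSpt n ω hx)
  have hmeasS : ∀ (n : ℕ) (ω : Om m), AEStronglyMeasurable (Sfun Pop n ω) mLeb :=
    fun n ω => (isBV_Sfun hbv n ω).1.aestronglyMeasurable
  have hconv_ae : ∀ ω : Om m, ∀ᵐ x ∂mLeb,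
      Tendsto (fun n => Sfun Pop n ω x) atTop (𝓝 (hfun Pop ω x)) :=
    fun ω => ae_mem_Icc.mono fun x hx => hconvS ω hx
  have hmeash : ∀ ω : Om m, AEStronglyMeasurable (hfun Pop ω) mLeb :=
    fun ω => aestronglyMeasurable_of_tendsto_ae atTop (fun n => hmeasS n ω) (hconv_ae ω)
  have hinth : ∀ ω : Om m, Integrable (hfun Pop ω) mLeb := fun ω =>
    Integrable.mono' (integrable_const Cb) (hmeash ω)
      (ae_mem_Icc.mono fun x hx => by rw [Real.norm_eq_abs]; exact hhpt ω hx)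
  have hSvar : ∀ (n : ℕ) (ω : Om m),
      eVariationOn (Sfun Pop n ω) (Set.Icc 0 1) ≤ ENNReal.ofReal X := by
    intro n ω
    have h0 : Sfun Pop n ω = fun x =>
        (fun _ : ℝ => (1:ℝ)) x + (fun y => ∑ k ∈ Finset.range n, dfun Pop k ω y) x := rfl
    calc eVariationOn (Sfun Pop n ω) (Set.Icc 0 1)
        ≤ eVariationOn (fun _ : ℝ => (1:ℝ)) (Set.Icc 0 1)
          + eVariationOn (fun y => ∑ k ∈ Finset.range n, dfun Pop k ω y) (Set.Icc 0 1) := by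
          rw [h0]; exact evar_add_le _ _ _
      _ = eVariationOn (fun y => ∑ k ∈ Finset.range n, dfun Pop k ω y) (Set.Icc 0 1) := by
          rw [evar_const, zero_add]
      _ ≤ ∑ k ∈ Finset.range n, eVariationOn (dfun Pop k ω) (Set.Icc 0 1) :=
          evar_sum_le _ _ _
      _ ≤ ∑ k ∈ Finset.range n, ENNReal.ofReal (b k) :=
          Finset.sum_le_sum fun k _ => hdvar k ω
      _ = ENNReal.ofReal (∑ k ∈ Finset.range n, b k) :=
          (ENNReal.ofReal_sum_of_nonneg fun k _ => hbnn k).symm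
      _ ≤ ENNReal.ofReal X := ENNReal.ofReal_le_ofReal (by
          rw [← htsum_b]; exact Summable.sum_le_tsum _ (fun k _ => hbnn k) hsum_b)
  have hhvar : ∀ ω : Om m,
      eVariationOn (hfun Pop ω) (Set.Icc 0 1) ≤ ENNReal.ofReal X :=
    fun ω => evar_limit (fun n => hSvar n ω) (fun x hx => hconvS ω hx)
  have hhBV : ∀ ω : Om m, IsBV (hfun Pop ω) := fun ω =>
    ⟨hinth ω, ((hhvar ω).trans_lt ENNReal.ofReal_lt_top).ne⟩
  have hBVb : ∀ ω : Om m, BVnorm (hfun Pop ω) ≤ Cb + X := by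
    intro ω
    have h1 : (∫ x, |hfun Pop ω x| ∂mLeb) ≤ Cb :=
      integral_abs_le_of_bound (hinth ω) fun x hx => hhpt ω hx
    have h2 : var (hfun Pop ω) ≤ X := var_le_of_evar_le hX0 (hhvar ω)
    unfold BVnorm
    linarith
  have hSint : ∀ (n : ℕ) (ω : Om m), ∫ x, Sfun Pop n ω x ∂mLeb = 1 := by
    intro n ω
    have hint_sum : Integrable (fun x => ∑ k ∈ Finset.range n, dfun Pop k ω x) mLeb :=
      integrable_finset_sum _ fun k _ => (isBV_dfun hbv k ω).1
    have h0 : ∫ x, Sfun Pop n ω x ∂mLeb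
        = ∫ x, ((1:ℝ) + ∑ k ∈ Finset.range n, dfun Pop k ω x) ∂mLeb := rfl
    rw [h0, integral_add (integrable_const 1) hint_sum,
      integral_finset_sum _ fun k _ => (isBV_dfun hbv k ω).1]
    have hz : ∀ k ∈ Finset.range n, ∫ x, dfun Pop k ω x ∂mLeb = 0 := by
      intro k _
      have hp := pcomp_int hd hbv (isBV_e hbv (ω (-(k:ℤ)-1))) (shiftNeg k ω) k
      calc ∫ x, dfun Pop k ω x ∂mLeb
          = ∫ x, (Pop (ω (-(k:ℤ)-1)) (fun _ => 1) x - 1) ∂mLeb := hp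
        _ = 0 := hinte _
    rw [Finset.sum_congr rfl hz]
    simp
  have hinth1 : ∀ ω : Om m, ∫ x, hfun Pop ω x ∂mLeb = 1 := by
    intro ω
    have ht : Tendsto (fun n => ∫ x, Sfun Pop n ω x ∂mLeb) atTop
        (𝓝 (∫ x, hfun Pop ω x ∂mLeb)) := by
      apply tendsto_integral_of_dominated_convergence (fun _ => Cb)
        (fun n => hmeasS n ω) (integrable_const _)
      · exact fun n => ae_mem_Icc.mono fun x hx => by
          rw [Real.norm_eq_abs]; exact hSpt n ω hx
      · exact hconv_ae ω
    have ht2 : Tendsto (fun n => ∫ x, Sfun Pop n ω x ∂mLeb) atTop (𝓝 1) := by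
      simp only [hSint]; exact tendsto_const_nhds
    exact tendsto_nhds_unique ht ht2
  have hSu : ∀ (n : ℕ) (ω : Om m),
      Sfun Pop n ω =ᵐ[mLeb] Pcomp Pop (shiftNeg n ω) n (fun _ => 1) := by
    intro n
    induction n with
    | zero =>
        intro ω
        rw [shiftNeg_zero]
        have h0 : Sfun Pop 0 ω = fun _ => (1:ℝ) := by funext x; unfold Sfun; simp
        rw [h0]
        exact Filter.Eventually.of_forall fun x => rfl
    | succ n ih =>
        intro ω
        have e1 : Sfun Pop (n+1) ω = fun x => Sfun Pop n ω x + dfun Pop n ω x := by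
          funext x; unfold Sfun; rw [Finset.sum_range_succ]; ring
        have hu := u_succ (Pop := Pop) n ω
        have hps := pcomp_sub hd hbv hTmeas
          (f := Pop (ω (-(n:ℤ)-1)) (fun _ => 1)) (g := fun _ => (1:ℝ))
          (hbv _ _ (isBV_const 1)) (isBV_const 1) (shiftNeg n ω) n
        rw [← hu] at hps
        have hdae : dfun Pop n ω =ᵐ[mLeb]
            fun x => Pcomp Pop (shiftNeg (n+1) ω) (n+1) (fun _ => 1) x
              - Pcomp Pop (shiftNeg n ω) n (fun _ => 1) x := hps
        rw [e1]
        filter_upwards [ih ω, hdae] with x h1 h2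
        show Sfun Pop n ω x + dfun Pop n ω x
          = Pcomp Pop (shiftNeg (n+1) ω) (n+1) (fun _ => 1) x
        rw [h1, h2]
        ring
  have hlow : ∀ ω : Om m, ∀ᵐ x ∂mLeb, cmin ≤ hfun Pop ω x := by
    intro ω
    have hall : ∀ᵐ x ∂mLeb, ∀ n : ℕ,
        Sfun Pop n ω x = Pcomp Pop (shiftNeg n ω) n (fun _ => 1) x :=
      ae_all_iff.2 fun n => hSu n ω
    filter_upwards [hall, ae_mem_Icc] with x hx1 hx2
    refine ge_of_tendsto (hconvS ω hx2) ?_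
    filter_upwards [eventually_ge_atTop 1] with n hn
    rw [hx1 n]
    exact hMin n hn (shiftNeg n ω) x hx2
  have hnn : ∀ ω : Om m, ∀ᵐ x ∂mLeb, 0 ≤ hfun Pop ω x :=
    fun ω => (hlow ω).mono fun x hx => le_trans hcmin.le hx
  have hequiv : ∀ ω : Om m, Pop (ω 0) (hfun Pop ω) =ᵐ[mLeb] hfun Pop (shift ω) := by
    intro ω
    refine pop_limit hd hbv hTmeas (fs := fun n => Sfun Pop n ω)
      (qs := fun n => Sfun Pop (n+1) (shift ω)) (Cb := Cb) (hhBV ω) (hinth (shift ω))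
      (fun n => isBV_Sfun hbv n ω) (fun n => pop_Sfun hd hbv hTmeas n ω)
      (fun n => (isBV_Sfun hbv (n+1) (shift ω)).1)
      (fun n => ae_mem_Icc.mono fun x hx => hSpt n ω hx)
      (fun n => ae_mem_Icc.mono fun x hx => hSpt (n+1) (shift ω) hx)
      (hconv_ae ω) ?_
    refine ae_mem_Icc.mono fun x hx => ?_
    exact (hconvS (shift ω) hx).comp (tendsto_add_atTop_nat 1)
  have hhold : ∀ (n : ℕ) (ω ω' : Om m), (∀ ℓ : ℤ, |ℓ| ≤ (n:ℤ) → ω ℓ = ω' ℓ) →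
      BVnorm (fun x => hfun Pop ω x - hfun Pop ω' x) ≤ (4 * X + 1) * θ ^ n := by
    intro n ω ω' hagree
    set cn : ℝ := 2 * X * θ ^ n with hcndef
    have hθn : (0:ℝ) < θ ^ n := pow_pos hθ0 n
    have hcn0 : 0 ≤ cn := by
      simp only [hcndef]
      exact mul_nonneg (mul_nonneg (by norm_num) hX0) hθn.le
    have hdeq : ∀ k, k < n → dfun Pop k ω = dfun Pop k ω' := by
      intro k hk
      apply dfun_congr_word
      intro ℓ hℓ
      apply hagree
      omega
    set ρf : ℕ → ℝ := fun k => if k < n then 0 else 2 * b k with hρdef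
    have hρnn : ∀ k, 0 ≤ ρf k := by
      intro k
      simp only [hρdef]
      split
      · exact le_rfl
      · exact mul_nonneg (by norm_num) (hbnn k)
    have hρsummable : Summable ρf := by
      refine Summable.of_nonneg_of_le hρnn (fun k => ?_) (hsum_b.mul_left 2)
      simp only [hρdef]
      split
      · exact mul_nonneg (by norm_num) (hbnn k)
      · exact le_rfl
    have hρtsum : ∑' k, ρf k ≤ cn := by
      have h1 : ∑ k ∈ Finset.range n, ρf k = 0 :=
        Finset.sum_eq_zero fun k hk => by
          simp only [hρdef]; rw [if_pos (Finset.mem_range.1 hk)]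
      have h2 := Summable.sum_add_tsum_nat_add n hρsummable
      have h3 : ∀ i : ℕ, ρf (i + n) = (2 * (C₀ * F) * θ ^ n) * θ ^ i := by
        intro i
        simp only [hρdef, hbdef]
        rw [if_neg (by omega), pow_add]
        ring
      have h4 : ∑' k, ρf k = (2 * (C₀ * F) * θ ^ n) * (1 - θ)⁻¹ := by
        rw [← h2, h1, zero_add, tsum_congr h3, tsum_mul_left,
          tsum_geometric_of_lt_one hθ0.le hθ1]
      rw [h4]
      exact le_of_eq (by rw [hcndef, hXdef]; ring)
    have hevk : ∀ k, eVariationOn (fun x => dfun Pop k ω x - dfun Pop k ω' x)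
        (Set.Icc 0 1) ≤ ENNReal.ofReal (ρf k) := by
      intro k
      by_cases hk : k < n
      · have hzero : (fun x => dfun Pop k ω x - dfun Pop k ω' x) = fun _ => (0:ℝ) := by
          funext x; rw [hdeq k hk]; ring
        rw [hzero, evar_const]
        exact bot_le
      · simp only [hρdef]
        rw [if_neg hk]
        refine (evar_sub_le _ _ _).trans ?_
        refine (add_le_add (hdvar k ω) (hdvar k ω')).trans ?_
        rw [← ENNReal.ofReal_add (hbnn k) (hbnn k)]
        exact ENNReal.ofReal_le_ofReal (by linarith [hbnn k])
    have hGid : ∀ N : ℕ, (fun x => Sfun Pop N ω x - Sfun Pop N ω' x)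
        = fun x => ∑ k ∈ Finset.range N, (dfun Pop k ω x - dfun Pop k ω' x) := by
      intro N; funext x; unfold Sfun; rw [Finset.sum_sub_distrib]; ring
    have hGvar : ∀ N, eVariationOn (fun x => Sfun Pop N ω x - Sfun Pop N ω' x)
        (Set.Icc 0 1) ≤ ENNReal.ofReal cn := by
      intro N
      rw [hGid N]
      refine ((evar_sum_le _ _ _).trans (Finset.sum_le_sum fun k _ => hevk k)).trans ?_
      rw [← ENNReal.ofReal_sum_of_nonneg fun k _ => hρnn k]
      exact ENNReal.ofReal_le_ofReal
        ((Summable.sum_le_tsum _ (fun k _ => hρnn k) hρsummable).trans hρtsum)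
    have hdiffconv : ∀ x : ℝ, x ∈ Set.Icc (0:ℝ) 1 →
        Tendsto (fun N => Sfun Pop N ω x - Sfun Pop N ω' x) atTop
          (𝓝 (hfun Pop ω x - hfun Pop ω' x)) :=
      fun x hx => (hconvS ω hx).sub (hconvS ω' hx)
    have hvar_diff : eVariationOn (fun x => hfun Pop ω x - hfun Pop ω' x)
        (Set.Icc 0 1) ≤ ENNReal.ofReal cn :=
      evar_limit hGvar fun x hx => hdiffconv x hx
    have hGpt : ∀ (N : ℕ) {x : ℝ}, x ∈ Set.Icc (0:ℝ) 1 →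
        |Sfun Pop N ω x - Sfun Pop N ω' x| ≤ cn := by
      intro N x hx
      have e := congrFun (hGid N) x
      rw [e]
      refine (Finset.abs_sum_le_sum_abs _ _).trans ?_
      refine (Finset.sum_le_sum fun k _ => ?_).trans
        ((Summable.sum_le_tsum _ (fun k _ => hρnn k) hρsummable).trans hρtsum)
      by_cases hk : k < n
      · rw [hdeq k hk, sub_self, abs_zero]
        exact hρnn k
      · simp only [hρdef]
        rw [if_neg hk]
        refine (abs_sub _ _).trans ?_
        have ha := hdpt k ω hx
        have hb' := hdpt k ω' hx
        linarith
    have hpt_diff : ∀ x : ℝ, x ∈ Set.Icc (0:ℝ) 1 →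
        |hfun Pop ω x - hfun Pop ω' x| ≤ cn :=
      fun x hx => le_of_tendsto (hdiffconv x hx).abs
        (Filter.Eventually.of_forall fun N => hGpt N hx)
    have hint_diff : (∫ x, |hfun Pop ω x - hfun Pop ω' x| ∂mLeb) ≤ cn :=
      integral_abs_le_of_bound ((hinth ω).sub (hinth ω')) fun x hx => hpt_diff x hx
    have hv : var (fun x => hfun Pop ω x - hfun Pop ω' x) ≤ cn :=
      var_le_of_evar_le hcn0 hvar_diff
    unfold BVnorm
    have hcne : cn = 2 * X * θ ^ n := hcndef
    nlinarith [hθn.le, hX0]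
  refine ⟨hfun Pop, ⟨hhBV, hequiv, fun ω => ⟨hnn ω, hinth1 ω⟩, ⟨Cb + X, hBVb⟩, ?_, ?_⟩, ?_⟩
  · refine ⟨max Cb cmin⁻¹, lt_of_lt_of_le hCb0 (le_max_left _ _), fun ω => ?_⟩
    filter_upwards [hlow ω, ae_mem_Icc] with x h1 h2
    constructor
    · have hinv : (max Cb cmin⁻¹)⁻¹ ≤ cmin := by
        have h1' : cmin⁻¹ ≤ max Cb cmin⁻¹ := le_max_right _ _
        have h2' := inv_anti₀ (inv_pos.2 hcmin) h1'
        rwa [inv_inv] at h2'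
      exact hinv.trans h1
    · exact (le_abs_self _).trans ((hhpt ω h2).trans (le_max_left _ _))
  · refine ⟨4 * X + 1, 1, by linarith, one_pos, ?_⟩
    intro n ω ω' hagree
    rw [Real.rpow_one]
    exact hhold n ω ω' hagree
  · intro h' hGF ω
    obtain ⟨h'BV, h'equiv, h'prob, ⟨B', hB'⟩, -, -⟩ := hGF
    have hBVdiff : ∀ W : Om m, BVnorm (fun x => h' W x - hfun Pop W x) ≤ B' + (Cb + X) :=
      fun W => (BVnorm_sub_le (h'BV W) (hhBV W)).trans (add_le_add (hB' W) (hBVb W))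
    have hIbound : ∀ n : ℕ, 1 ≤ n →
        (∫ x, |h' ω x - hfun Pop ω x| ∂mLeb) ≤ Cdec * θ ^ n * (B' + (Cb + X)) := by
      intro n hn
      set W := shiftNeg n ω with hWdef
      have hfd : IsBV (fun x => h' W x - hfun Pop W x) := (h'BV W).sub (hhBV W)
      have hfd0 : ∫ x, (h' W x - hfun Pop W x) ∂mLeb = 0 := by
        rw [integral_sub (h'BV W).1 (hinth W), (h'prob W).2, hinth1 W]
        ring
      have hdec := hDec n hn W _ hfd hfd0
      have hae : Pcomp Pop W n (fun x => h' W x - hfun Pop W x)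
          =ᵐ[mLeb] fun x => h' ω x - hfun Pop ω x := by
        have h1 := pcomp_sub hd hbv hTmeas (h'BV W) (hhBV W) W n
        have h2 := pcomp_equivariant hd hbv h'BV h'equiv n ω
        have h3 := pcomp_equivariant hd hbv hhBV hequiv n ω
        exact h1.trans (h2.sub h3)
      have e1 : (∫ x, |h' ω x - hfun Pop ω x| ∂mLeb)
          = ∫ x, |Pcomp Pop W n (fun x => h' W x - hfun Pop W x) x| ∂mLeb := by
        apply integral_congr_ae
        filter_upwards [hae] with x hx
        rw [hx]
      rw [e1]
      refine ((integral_abs_le_BVnorm _).trans hdec).trans ?_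
      exact mul_le_mul_of_nonneg_left (hBVdiff W)
        (mul_nonneg hCdec.le (pow_pos hθ0 n).le)
    have hI0 : (∫ x, |h' ω x - hfun Pop ω x| ∂mLeb) = 0 := by
      have hInn : 0 ≤ ∫ x, |h' ω x - hfun Pop ω x| ∂mLeb :=
        integral_nonneg fun x => abs_nonneg _
      have hlim : Tendsto (fun n : ℕ => Cdec * θ ^ n * (B' + (Cb + X))) atTop (𝓝 0) := by
        have h0 := tendsto_pow_atTop_nhds_zero_of_lt_one hθ0.le hθ1
        have h2 := (h0.const_mul Cdec).mul_const (B' + (Cb + X))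
        simpa using h2
      have hle : (∫ x, |h' ω x - hfun Pop ω x| ∂mLeb) ≤ 0 := by
        refine ge_of_tendsto hlim ?_
        filter_upwards [eventually_ge_atTop 1] with n hn
        exact hIbound n hn
      linarith
    have hz := (integral_eq_zero_iff_of_nonneg_ae
      (Filter.Eventually.of_forall fun x => abs_nonneg _)
      ((h'BV ω).1.sub (hinth ω)).abs).1 hI0
    filter_upwards [hz] with x hx
    have hx' : |h' ω x - hfun Pop ω x| = 0 := hx
    have := abs_eq_zero.1 hx'
    linarith
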